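/- There exists a sequence of twice continuously differentiable functions φ_k : ℝ → ℝ, k ≥ 1, with nonnegative values, such that: (i) for every z ∈ ℝ the sequence (φ_k(z))_{k≥1} is nondecreasing and converges to z⁺ := max{z,0} as k → ∞; (ii) φ_k'(z) ∈ [0,1] for all z ≥ 0 and all k; (iii) φ_k(z) = 0 and φ_k'(z) = 0 for all z ≤ 0 and all k; (iv) φ_k''(x − y)·(√x − √y)² ≤ 2/k for all x, y ≥ 0 and all k. -/

import Mathlib

open Real Filter Topology

noncomputable def YamPhi (α d c : ℝ) (z : ℝ) : ℝ :=
  if 0 < z then z * Real.exp (-c - d * z ^ (-α)) else 0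

noncomputable def YamD (α d c : ℝ) (z : ℝ) : ℝ :=
  if 0 < z then Real.exp (-c - d * z ^ (-α)) * (1 + d * α * z ^ (-α)) else 0

noncomputable def YamDD (α d c : ℝ) (z : ℝ) : ℝ :=
  if 0 < z then
    Real.exp (-c - d * z ^ (-α)) * (d * α * z ^ (-α - 1)) * (1 - α + d * α * z ^ (-α))
  else 0

lemma yam_master {α d : ℝ} (hα : 0 < α) (hd : 0 < d) (β : ℝ) :
    Tendsto (fun z : ℝ => z ^ (-β) * Real.exp (-(d * z ^ (-α)))) (𝓝[>] (0:ℝ)) (𝓝 0) := by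
  have h1 : Tendsto (fun z : ℝ => z ^ (-α)) (𝓝[>] (0:ℝ)) atTop := by
    refine ((tendsto_rpow_atTop hα).comp tendsto_inv_nhdsGT_zero).congr' ?_
    filter_upwards [self_mem_nhdsWithin] with z hz
    have hz' : (0:ℝ) < z := hz
    simp only [Function.comp_apply]
    rw [← Real.rpow_neg_one z, ← Real.rpow_mul hz'.le]
    norm_num
  have h2 := tendsto_rpow_mul_exp_neg_mul_atTop_nhds_zero (β/α) d hd
  refine (h2.comp h1).congr' ?_
  filter_upwards [self_mem_nhdsWithin] with z hz
  have hz' : (0:ℝ) < z := hz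
  simp only [Function.comp_apply]
  rw [← Real.rpow_mul hz'.le]
  rw [show -α * (β/α) = -β by field_simp, neg_mul, mul_comm d]

section Yam

variable {α d c : ℝ} (hα : 0 < α) (hα1 : α ≤ 1) (hd : 0 < d) (hc : 0 ≤ c)

lemma yam_exp_split {z : ℝ} :
    Real.exp (-c - d * z ^ (-α)) = Real.exp (-c) * Real.exp (-(d * z ^ (-α))) := by
  rw [← Real.exp_add]; ring_nf

include hα hd in
lemma yam_lim0 : Tendsto (fun z : ℝ => Real.exp (-c - d * z ^ (-α))) (𝓝[>] (0:ℝ)) (𝓝 0) := by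
  have h := (yam_master hα hd 0).const_mul (Real.exp (-c))
  rw [mul_zero] at h
  refine h.congr ?_
  intro z
  rw [yam_exp_split]
  norm_num

include hα hd in
lemma yam_limD : Tendsto (fun z : ℝ =>
    (Real.exp (-c - d * z ^ (-α)) * (1 + d * α * z ^ (-α))) / z) (𝓝[>] (0:ℝ)) (𝓝 0) := by
  have h1 := (yam_master hα hd 1).const_mul (Real.exp (-c))
  have h2 := (yam_master hα hd (α + 1)).const_mul (Real.exp (-c) * (d * α))
  have h := h1.add h2
  norm_num at h
  refine h.congr' ?_
  filter_upwards [self_mem_nhdsWithin] with z hz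
  have hz' : (0:ℝ) < z := hz
  rw [yam_exp_split]
  rw [Real.rpow_add hz' (-1:ℝ) (-α), Real.rpow_neg_one]
  field_simp

include hα hd in
lemma yam_limDD : Tendsto (fun z : ℝ =>
    Real.exp (-c - d * z ^ (-α)) * (d * α * z ^ (-α - 1)) * (1 - α + d * α * z ^ (-α)))
    (𝓝[>] (0:ℝ)) (𝓝 0) := by
  have h1 := (yam_master hα hd (α + 1)).const_mul (Real.exp (-c) * (d * α * (1 - α)))
  have h2 := (yam_master hα hd (2*α + 1)).const_mul (Real.exp (-c) * (d * α * (d * α)))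
  have h := h1.add h2
  norm_num at h
  refine h.congr' ?_
  filter_upwards [self_mem_nhdsWithin] with z hz
  have hz' : (0:ℝ) < z := hz
  rw [yam_exp_split]
  rw [show -α - 1 = -1 + -α by ring, show (-1:ℝ) + -(2*α) = (-1 + -α) + -α by ring,
    Real.rpow_add hz' ((-1:ℝ) + -α) (-α), Real.rpow_add hz' (-1:ℝ) (-α)]
  ring

end Yam

section Yam2

variable {α d c : ℝ} (hα : 0 < α) (hα1 : α ≤ 1) (hd : 0 < d) (hc : 0 ≤ c)

lemma yamPhi_nonpos {z : ℝ} (hz : z ≤ 0) : YamPhi α d c z = 0 := by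
  rw [YamPhi, if_neg (not_lt.2 hz)]

lemma yamD_nonpos {z : ℝ} (hz : z ≤ 0) : YamD α d c z = 0 := by
  rw [YamD, if_neg (not_lt.2 hz)]

lemma yamDD_nonpos {z : ℝ} (hz : z ≤ 0) : YamDD α d c z = 0 := by
  rw [YamDD, if_neg (not_lt.2 hz)]

lemma yam_exp_hasDeriv {z : ℝ} (hz : 0 < z) :
    HasDerivAt (fun t : ℝ => Real.exp (-c - d * t ^ (-α)))
      (Real.exp (-c - d * z ^ (-α)) * (d * α * z ^ (-α - 1))) z := by
  have h1 : HasDerivAt (fun t : ℝ => t ^ (-α)) (-α * z ^ (-α - 1)) z :=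
    Real.hasDerivAt_rpow_const (Or.inl hz.ne')
  have h2 : HasDerivAt (fun t : ℝ => -c - d * t ^ (-α)) (-(d * (-α * z ^ (-α - 1)))) z :=
    (h1.const_mul d).const_sub (-c)
  have h3 := h2.exp
  convert h3 using 1
  ring

lemma yamPhi_hasDeriv_pos {z : ℝ} (hz : 0 < z) :
    HasDerivAt (YamPhi α d c) (YamD α d c z) z := by
  have h4 := (hasDerivAt_id z).mul (yam_exp_hasDeriv (α := α) (d := d) (c := c) hz)
  have heq : YamPhi α d c =ᶠ[𝓝 z] fun t => t * Real.exp (-c - d * t ^ (-α)) := by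
    filter_upwards [Ioi_mem_nhds hz] with t ht
    rw [YamPhi, if_pos (Set.mem_Ioi.mp ht)]
  refine (h4.congr_of_eventuallyEq heq).congr_deriv ?_
  rw [YamD, if_pos hz]
  have hz1 : z ^ (-α - 1) * z = z ^ (-α) := by
    nth_rewrite 2 [← Real.rpow_one z]
    rw [← Real.rpow_add hz]
    norm_num
  simp only [id_eq]
  linear_combination (Real.exp (-c - d * z ^ (-α)) * d * α) * hz1

lemma yamD_hasDeriv_pos {z : ℝ} (hz : 0 < z) :
    HasDerivAt (YamD α d c) (YamDD α d c z) z := by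
  have h1 : HasDerivAt (fun t : ℝ => t ^ (-α)) (-α * z ^ (-α - 1)) z :=
    Real.hasDerivAt_rpow_const (Or.inl hz.ne')
  have h5 : HasDerivAt (fun t : ℝ => 1 + d * α * t ^ (-α)) (d * α * (-α * z ^ (-α - 1))) z :=
    (h1.const_mul (d * α)).const_add 1
  have h6 := (yam_exp_hasDeriv (α := α) (d := d) (c := c) hz).mul h5
  have heq : YamD α d c =ᶠ[𝓝 z] fun t => Real.exp (-c - d * t ^ (-α)) * (1 + d * α * t ^ (-α)) := by
    filter_upwards [Ioi_mem_nhds hz] with t ht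
    rw [YamD, if_pos (Set.mem_Ioi.mp ht)]
  refine (h6.congr_of_eventuallyEq heq).congr_deriv ?_
  rw [YamDD, if_pos hz]
  ring

lemma yamPhi_hasDeriv_neg {z : ℝ} (hz : z < 0) :
    HasDerivAt (YamPhi α d c) (YamD α d c z) z := by
  have heq : YamPhi α d c =ᶠ[𝓝 z] fun _ => (0:ℝ) := by
    filter_upwards [Iio_mem_nhds hz] with t ht
    exact yamPhi_nonpos ht.le
  refine ((hasDerivAt_const z (0:ℝ)).congr_of_eventuallyEq heq).congr_deriv ?_
  rw [yamD_nonpos hz.le]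

lemma yamD_hasDeriv_neg {z : ℝ} (hz : z < 0) :
    HasDerivAt (YamD α d c) (YamDD α d c z) z := by
  have heq : YamD α d c =ᶠ[𝓝 z] fun _ => (0:ℝ) := by
    filter_upwards [Iio_mem_nhds hz] with t ht
    exact yamD_nonpos ht.le
  refine ((hasDerivAt_const z (0:ℝ)).congr_of_eventuallyEq heq).congr_deriv ?_
  rw [yamDD_nonpos hz.le]

end Yam2

section Yam3

variable {α d c : ℝ} (hα : 0 < α) (hα1 : α ≤ 1) (hd : 0 < d) (hc : 0 ≤ c)

include hα hd in
lemma yamPhi_hasDeriv_zero : HasDerivAt (YamPhi α d c) (YamD α d c 0) 0 := by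
  rw [yamD_nonpos le_rfl]
  rw [hasDerivAt_iff_tendsto_slope]
  rw [← nhdsLT_sup_nhdsGT (0:ℝ), tendsto_sup]
  constructor
  · refine tendsto_const_nhds.congr' ?_
    filter_upwards [self_mem_nhdsWithin] with z hz
    have hz' : z < 0 := hz
    rw [slope_def_field, yamPhi_nonpos hz'.le, yamPhi_nonpos le_rfl]
    simp
  · refine (yam_lim0 hα hd (c := c)).congr' ?_
    filter_upwards [self_mem_nhdsWithin] with z hz
    have hz' : (0:ℝ) < z := hz
    rw [slope_def_field, yamPhi_nonpos le_rfl, YamPhi, if_pos hz']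
    rw [sub_zero, sub_zero, mul_div_cancel_left₀ _ hz'.ne']

include hα hd in
lemma yamD_hasDeriv_zero : HasDerivAt (YamD α d c) (YamDD α d c 0) 0 := by
  rw [yamDD_nonpos le_rfl]
  rw [hasDerivAt_iff_tendsto_slope]
  rw [← nhdsLT_sup_nhdsGT (0:ℝ), tendsto_sup]
  constructor
  · refine tendsto_const_nhds.congr' ?_
    filter_upwards [self_mem_nhdsWithin] with z hz
    have hz' : z < 0 := hz
    rw [slope_def_field, yamD_nonpos hz'.le, yamD_nonpos le_rfl]
    simp
  · refine (yam_limD hα hd (c := c)).congr' ?_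
    filter_upwards [self_mem_nhdsWithin] with z hz
    have hz' : (0:ℝ) < z := hz
    rw [slope_def_field, yamD_nonpos le_rfl, YamD, if_pos hz']
    rw [sub_zero, sub_zero]

include hα hd in
lemma yamPhi_hasDeriv : ∀ z : ℝ, HasDerivAt (YamPhi α d c) (YamD α d c z) z := by
  intro z
  rcases lt_trichotomy z 0 with hz | hz | hz
  · exact yamPhi_hasDeriv_neg hz
  · subst hz; exact yamPhi_hasDeriv_zero hα hd
  · exact yamPhi_hasDeriv_pos hz

include hα hd in
lemma yamD_hasDeriv : ∀ z : ℝ, HasDerivAt (YamD α d c) (YamDD α d c z) z := by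
  intro z
  rcases lt_trichotomy z 0 with hz | hz | hz
  · exact yamD_hasDeriv_neg hz
  · subst hz; exact yamD_hasDeriv_zero hα hd
  · exact yamD_hasDeriv_pos hz

include hα hd in
lemma yam_deriv_phi : deriv (YamPhi α d c) = YamD α d c :=
  funext fun z => (yamPhi_hasDeriv hα hd z).deriv

include hα hd in
lemma yam_deriv_D : deriv (YamD α d c) = YamDD α d c :=
  funext fun z => (yamD_hasDeriv hα hd z).deriv

include hα hd in
lemma yam_cont_DD : Continuous (YamDD α d c) := by
  rw [continuous_iff_continuousAt]
  intro z
  rcases lt_trichotomy z 0 with hz | hz | hz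
  · have heq : YamDD α d c =ᶠ[𝓝 z] fun _ => (0:ℝ) := by
      filter_upwards [Iio_mem_nhds hz] with t ht
      exact yamDD_nonpos ht.le
    exact ContinuousAt.congr continuousAt_const heq.symm
  · subst hz
    have h0 : YamDD α d c 0 = 0 := yamDD_nonpos le_rfl
    rw [ContinuousAt, h0]
    have hL : Tendsto (YamDD α d c) (𝓝[≤] (0:ℝ)) (𝓝 0) := by
      refine tendsto_const_nhds.congr' ?_
      filter_upwards [self_mem_nhdsWithin] with t ht
      exact (yamDD_nonpos ht).symm
    have hR : Tendsto (YamDD α d c) (𝓝[>] (0:ℝ)) (𝓝 0) := by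
      refine (yam_limDD hα hd (c := c)).congr' ?_
      filter_upwards [self_mem_nhdsWithin] with t ht
      rw [YamDD, if_pos (Set.mem_Ioi.mp ht)]
    have := tendsto_sup.2 ⟨hL, hR⟩
    rwa [nhdsLE_sup_nhdsGT] at this
  · have hco : ContinuousAt (fun t : ℝ =>
        Real.exp (-c - d * t ^ (-α)) * (d * α * t ^ (-α - 1)) * (1 - α + d * α * t ^ (-α))) z := by
      have hr1 : ContinuousAt (fun t : ℝ => t ^ (-α)) z :=
        Real.continuousAt_rpow_const z (-α) (Or.inl hz.ne')
      have hr2 : ContinuousAt (fun t : ℝ => t ^ (-α - 1)) z :=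
        Real.continuousAt_rpow_const z (-α - 1) (Or.inl hz.ne')
      exact ((Real.continuous_exp.continuousAt.comp
        ((continuousAt_const.mul hr1).const_sub (-c))).mul
        (continuousAt_const.mul hr2)).mul (continuousAt_const.add (continuousAt_const.mul hr1))
    refine ContinuousAt.congr hco ?_
    filter_upwards [Ioi_mem_nhds hz] with t ht
    rw [YamDD, if_pos (Set.mem_Ioi.mp ht)]

include hα hd in
lemma yam_contDiff : ContDiff ℝ 2 (YamPhi α d c) := by
  rw [show ((2:WithTop ℕ∞)) = 1 + 1 from rfl, contDiff_succ_iff_deriv]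
  refine ⟨fun z => (yamPhi_hasDeriv hα hd z).differentiableAt, by simp, ?_⟩
  rw [yam_deriv_phi hα hd, contDiff_one_iff_deriv]
  exact ⟨fun z => (yamD_hasDeriv hα hd z).differentiableAt, by
    rw [yam_deriv_D hα hd]; exact yam_cont_DD hα hd⟩

end Yam3

lemma yam_xexp {x : ℝ} (hx : 0 ≤ x) : x * Real.exp (-x) ≤ 1 := by
  have h := Real.add_one_le_exp x
  have hme : Real.exp (-x) * Real.exp x = 1 := by rw [← Real.exp_add]; simp
  nlinarith [Real.exp_pos (-x), Real.exp_pos x]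

lemma yam_x2exp {x : ℝ} (hx : 0 ≤ x) : x ^ 2 * Real.exp (-x) ≤ 2 := by
  have h3 := Real.add_one_le_exp (x / 3)
  have hexp : Real.exp x = Real.exp (x / 3) ^ (3:ℕ) := by
    rw [← Real.exp_nat_mul]; ring_nf
  have hcube : (x / 3 + 1) ^ (3:ℕ) ≤ Real.exp (x / 3) ^ (3:ℕ) :=
    pow_le_pow_left₀ (by linarith) h3 3
  have hx2 : x ^ 2 ≤ 2 * Real.exp x := by
    rw [hexp]
    nlinarith [mul_nonneg hx (sq_nonneg (x - 9/4))]
  have hme : Real.exp (-x) * Real.exp x = 1 := by rw [← Real.exp_add]; simp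
  nlinarith [Real.exp_pos (-x), Real.exp_pos x]

section Yam4

variable {α d c : ℝ} (hα : 0 < α) (hα1 : α ≤ 1) (hd : 0 < d) (hc : 0 ≤ c)


lemma yamPhi_nonneg (z : ℝ) : 0 ≤ YamPhi α d c z := by
  rw [YamPhi]
  split_ifs with h
  · positivity
  · exact le_rfl

include hα hα1 hd hc in
lemma yamD_mem_Icc {z : ℝ} (hz : 0 ≤ z) : YamD α d c z ∈ Set.Icc (0:ℝ) 1 := by
  rcases eq_or_lt_of_le hz with hz0 | hz0
  · rw [← hz0, yamD_nonpos le_rfl]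
    exact ⟨le_rfl, zero_le_one⟩
  rw [YamD, if_pos hz0]
  have hB : 0 ≤ z ^ (-α) := Real.rpow_nonneg hz _
  set x : ℝ := d * z ^ (-α) with hxdef
  have hx : 0 ≤ x := mul_nonneg hd.le hB
  constructor
  · have : 0 ≤ 1 + d * α * z ^ (-α) := by nlinarith
    positivity
  · have harg : d * α * z ^ (-α) = α * x := by rw [hxdef]; ring
    rw [harg]
    have he : Real.exp (-c - x) ≤ Real.exp (-x) := Real.exp_le_exp.2 (by linarith)
    have key : 1 + α * x ≤ Real.exp x := by
      have := Real.add_one_le_exp x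
      nlinarith
    have hme : Real.exp (-x) * Real.exp x = 1 := by rw [← Real.exp_add]; simp
    nlinarith [Real.exp_pos (-x), Real.exp_pos x, mul_le_mul_of_nonneg_right he
      (by nlinarith : (0:ℝ) ≤ 1 + α * x)]

include hα hα1 hd in
lemma yamDD_nonneg (z : ℝ) : 0 ≤ YamDD α d c z := by
  rw [YamDD]
  split_ifs with h
  · have hB : 0 ≤ z ^ (-α) := Real.rpow_nonneg h.le _
    have hA : 0 ≤ z ^ (-α - 1) := Real.rpow_nonneg h.le _
    have h1 : 0 ≤ 1 - α + d * α * z ^ (-α) := by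
      nlinarith [mul_nonneg (mul_nonneg hd.le hα.le) hB]
    have h2 : 0 ≤ d * α * z ^ (-α - 1) := by positivity
    positivity
  · exact le_rfl

include hα hα1 hd hc in
lemma yamDD_key {z : ℝ} (hz : 0 < z) : YamDD α d c z * z ≤ 2 * α := by
  rw [YamDD, if_pos hz]
  have hz1 : z ^ (-α - 1) * z = z ^ (-α) := by
    nth_rewrite 2 [← Real.rpow_one z]
    rw [← Real.rpow_add hz]
    norm_num
  set E : ℝ := Real.exp (-c - d * z ^ (-α)) with hEdef
  set x : ℝ := d * z ^ (-α) with hxdef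
  have hB : 0 ≤ z ^ (-α) := Real.rpow_nonneg hz.le _
  have hx : 0 ≤ x := mul_nonneg hd.le hB
  have heq : E * (d * α * z ^ (-α - 1)) * (1 - α + d * α * z ^ (-α)) * z
      = α * (E * x * (1 - α + α * x)) := by
    rw [hxdef]
    linear_combination (E * d * α * (1 - α + d * α * z ^ (-α))) * hz1
  rw [heq]
  have hQ : E * x * (1 - α + α * x) ≤ 2 := by
    have hEx : E ≤ Real.exp (-x) := by
      rw [hEdef, hxdef]
      exact Real.exp_le_exp.2 (by linarith)
    have q1 := yam_xexp hx
    have q2 := yam_x2exp hx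
    have hfac : 0 ≤ x * (1 - α + α * x) := by nlinarith
    have h3 : E * (x * (1 - α + α * x)) ≤ Real.exp (-x) * (x * (1 - α + α * x)) :=
      mul_le_mul_of_nonneg_right hEx hfac
    nlinarith [mul_le_mul_of_nonneg_left q1 (by linarith : (0:ℝ) ≤ 1 - α),
      mul_le_mul_of_nonneg_left q2 hα.le]
  nlinarith

end Yam4

theorem exists_smooth_approx_pos_part :
    ∃ φ : ℕ → ℝ → ℝ,
      (∀ k, 1 ≤ k → ContDiff ℝ 2 (φ k)) ∧
      (∀ k, 1 ≤ k → ∀ z : ℝ, 0 ≤ φ k z) ∧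
      (∀ z : ℝ, ∀ k l : ℕ, 1 ≤ k → k ≤ l → φ k z ≤ φ l z) ∧
      (∀ z : ℝ, Filter.Tendsto (fun k => φ k z) Filter.atTop (nhds (max z 0))) ∧
      (∀ k, 1 ≤ k → ∀ z : ℝ, 0 ≤ z → deriv (φ k) z ∈ Set.Icc (0 : ℝ) 1) ∧
      (∀ k, 1 ≤ k → ∀ z : ℝ, z ≤ 0 → φ k z = 0 ∧ deriv (φ k) z = 0) ∧
      (∀ k, 1 ≤ k → ∀ x y : ℝ, 0 ≤ x → 0 ≤ y →
        deriv (deriv (φ k)) (x - y) * (Real.sqrt x - Real.sqrt y) ^ 2 ≤ 2 / (k : ℝ)) := by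
  have hparam : ∀ k : ℕ, 1 ≤ k → 0 < ((k:ℝ))⁻¹ ∧ ((k:ℝ))⁻¹ ≤ 1 ∧ (0:ℝ) < (1/2:ℝ)^k ∧
      (0:ℝ) ≤ 2 * (1/2:ℝ)^k := by
    intro k hk
    have hk0 : (0:ℝ) < (k:ℝ) := by exact_mod_cast hk
    have hk1 : (1:ℝ) ≤ (k:ℝ) := by exact_mod_cast hk
    refine ⟨inv_pos.2 hk0, ?_, by positivity, by positivity⟩
    rw [inv_le_one_iff₀]
    right; exact hk1
  refine ⟨fun k => YamPhi ((k:ℝ))⁻¹ ((1/2:ℝ)^k) (2 * (1/2:ℝ)^k), ?_, ?_, ?_, ?_, ?_, ?_, ?_⟩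
  · intro k hk
    obtain ⟨hα, hα1, hd, hc⟩ := hparam k hk
    exact yam_contDiff hα hd
  · intro k hk z
    exact yamPhi_nonneg z
  · intro z k l hk hkl
    show YamPhi ((k:ℝ))⁻¹ ((1/2:ℝ)^k) (2 * (1/2:ℝ)^k) z
      ≤ YamPhi ((l:ℝ))⁻¹ ((1/2:ℝ)^l) (2 * (1/2:ℝ)^l) z
    rcases eq_or_lt_of_le hkl with rfl | hkl'
    · exact le_rfl
    by_cases hz : 0 < z
    · have hl : 1 ≤ l := hk.trans hkl
      have hk0 : (0:ℝ) < (k:ℝ) := by exact_mod_cast hk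
      have hl0 : (0:ℝ) < (l:ℝ) := by exact_mod_cast hl
      rw [YamPhi, if_pos hz, YamPhi, if_pos hz]
      set w := z ^ (-(((k:ℝ)) * ((l:ℝ)))⁻¹) with hwdef
      have hw0 : 0 < w := Real.rpow_pos_of_pos hz _
      have e1 : w ^ (k:ℕ) = z ^ (-((l:ℝ))⁻¹) := by
        rw [hwdef, ← Real.rpow_natCast (z ^ (-(((k:ℝ)) * ((l:ℝ)))⁻¹)) k,
          ← Real.rpow_mul hz.le]
        congr 1
        field_simp
      have e2 : w ^ (l:ℕ) = z ^ (-((k:ℝ))⁻¹) := by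
        rw [hwdef, ← Real.rpow_natCast (z ^ (-(((k:ℝ)) * ((l:ℝ)))⁻¹)) l,
          ← Real.rpow_mul hz.le]
        congr 1
        field_simp
      rw [← e1, ← e2]
      refine mul_le_mul_of_nonneg_left (Real.exp_le_exp.2 ?_) hz.le
      have hpl_le : ((1:ℝ)/2)^l ≤ (1/2:ℝ)^(k+1) :=
        pow_le_pow_of_le_one (by norm_num) (by norm_num) hkl'
      have hplk : ((1:ℝ)/2)^l ≤ (1/2:ℝ)^k :=
        pow_le_pow_of_le_one (by norm_num) (by norm_num) hkl
      have hpk : (0:ℝ) < (1/2:ℝ)^k := by positivity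
      have hpl : (0:ℝ) < (1/2:ℝ)^l := by positivity
      rcases le_or_gt w 1 with hw | hw
      · have hwk : w ^ (k:ℕ) ≤ 1 := pow_le_one₀ hw0.le hw
        have hwl : (0:ℝ) ≤ w ^ (l:ℕ) := by positivity
        have hs : (1/2:ℝ)^(k+1) = (1/2:ℝ)^k * (1/2) := pow_succ _ _
        nlinarith [mul_le_mul_of_nonneg_left hwk hpl.le]
      · have hwkl : w ^ (k:ℕ) ≤ w ^ (l:ℕ) := pow_le_pow_right₀ hw.le hkl
        have hmm : ((1:ℝ)/2)^l * w ^ (k:ℕ) ≤ (1/2:ℝ)^k * w ^ (l:ℕ) :=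
          mul_le_mul hplk hwkl (by positivity) hpk.le
        nlinarith
    · have hz' : z ≤ 0 := not_lt.1 hz
      rw [yamPhi_nonpos hz', yamPhi_nonpos hz']
  · intro z
    by_cases hz : 0 < z
    · rw [max_eq_left hz.le]
      show Tendsto (fun k : ℕ => YamPhi ((k:ℝ))⁻¹ ((1/2:ℝ)^k) (2 * (1/2:ℝ)^k) z) atTop (𝓝 z)
      have ha : Tendsto (fun k:ℕ => ((1:ℝ)/2)^k) atTop (𝓝 0) :=
        tendsto_pow_atTop_nhds_zero_of_lt_one (by norm_num) (by norm_num)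
      have hb : Tendsto (fun k:ℕ => z ^ (-((k:ℝ))⁻¹)) atTop (𝓝 1) := by
        have h1 : Tendsto (fun k:ℕ => -((k:ℝ))⁻¹ * Real.log z) atTop (𝓝 0) := by
          have := (tendsto_inv_atTop_nhds_zero_nat).neg.mul_const (Real.log z)
          simpa using this
        have h2 := (Real.continuous_exp.tendsto 0).comp h1
        rw [Real.exp_zero] at h2
        refine h2.congr fun k => ?_
        rw [Function.comp_apply, Real.rpow_def_of_pos hz, mul_comm]
      have hexp : Tendsto (fun k:ℕ => -(2*((1:ℝ)/2)^k) - (1/2:ℝ)^k * z ^ (-((k:ℝ))⁻¹))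
          atTop (𝓝 0) := by
        have := ((ha.const_mul 2).neg).sub (ha.mul hb)
        simpa using this
      have h3 := (Real.continuous_exp.tendsto 0).comp hexp
      rw [Real.exp_zero] at h3
      have h4 := h3.const_mul z
      rw [mul_one] at h4
      refine h4.congr fun k => ?_
      rw [YamPhi, if_pos hz, Function.comp_apply]
    · rw [max_eq_right (not_lt.1 hz)]
      refine tendsto_const_nhds.congr fun k => ?_
      exact (yamPhi_nonpos (not_lt.1 hz)).symm
  · intro k hk z hz
    obtain ⟨hα, hα1, hd, hc⟩ := hparam k hk
    show deriv (YamPhi ((k:ℝ))⁻¹ ((1/2:ℝ)^k) (2 * (1/2:ℝ)^k)) z ∈ Set.Icc (0:ℝ) 1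
    rw [yam_deriv_phi hα hd]
    exact yamD_mem_Icc hα hα1 hd hc hz
  · intro k hk z hz
    obtain ⟨hα, hα1, hd, hc⟩ := hparam k hk
    refine ⟨yamPhi_nonpos hz, ?_⟩
    show deriv (YamPhi ((k:ℝ))⁻¹ ((1/2:ℝ)^k) (2 * (1/2:ℝ)^k)) z = 0
    rw [yam_deriv_phi hα hd]
    exact yamD_nonpos hz
  · intro k hk x y hx hy
    obtain ⟨hα, hα1, hd, hc⟩ := hparam k hk
    show deriv (deriv (YamPhi ((k:ℝ))⁻¹ ((1/2:ℝ)^k) (2 * (1/2:ℝ)^k))) (x - y)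
      * (Real.sqrt x - Real.sqrt y) ^ 2 ≤ 2 / (k:ℝ)
    rw [yam_deriv_phi hα hd, yam_deriv_D hα hd]
    by_cases hxy : 0 < x - y
    · have hyx : y ≤ x := by linarith
      have hs : Real.sqrt y ≤ Real.sqrt x := Real.sqrt_le_sqrt hyx
      have h1 : (Real.sqrt x - Real.sqrt y)^2 ≤ x - y := by
        nlinarith [Real.sq_sqrt hx, Real.sq_sqrt hy, Real.sqrt_nonneg x, Real.sqrt_nonneg y,
          mul_le_mul_of_nonneg_right hs (Real.sqrt_nonneg y)]
      have h2 : 0 ≤ YamDD ((k:ℝ))⁻¹ ((1/2:ℝ)^k) (2 * (1/2:ℝ)^k) (x - y) :=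
        yamDD_nonneg hα hα1 hd _
      calc YamDD ((k:ℝ))⁻¹ ((1/2:ℝ)^k) (2 * (1/2:ℝ)^k) (x - y) * (Real.sqrt x - Real.sqrt y)^2
          ≤ YamDD ((k:ℝ))⁻¹ ((1/2:ℝ)^k) (2 * (1/2:ℝ)^k) (x - y) * (x - y) :=
            mul_le_mul_of_nonneg_left h1 h2
        _ ≤ 2 * ((k:ℝ))⁻¹ := yamDD_key hα hα1 hd hc hxy
        _ = 2 / (k:ℝ) := by rw [div_eq_mul_inv]
    · rw [yamDD_nonpos (not_lt.1 hxy), zero_mul]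
      have hk0 : (0:ℝ) < (k:ℝ) := by exact_mod_cast hk
      positivity
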